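/- Let I be a finite nonempty index set, let w : I → ℝ with w_i > 0 and Σ_i w_i = 1, and let x, z ∈ ℝ^n. For each i ∈ I let s_i ∈ ℝ^n satisfy the cutter inequality ⟨s_i, z − x⟩ ≥ ‖s_i‖². Let g ∈ ℝ^n, g ≠ 0, ĝ = g/‖g‖, and suppose ⟨ĝ, z − x⟩ ≥ 0 (z lies in the surrogate half-space). Define d_i = s_i − min(0, ⟨ĝ, s_i⟩)·ĝ (the projection of s_i onto the surrogate half-space), d = Σ_i w_i·d_i, and S = Σ_i w_i·‖s_i‖². Assume d ≠ 0, let λ ∈ [0, 2), and define x^{SC} = x + λ·(S/‖d‖²)·d. Then ‖x^{SC} − z‖² ≤ ‖x − z‖² − λ(2 − λ)·S·(S/‖d‖²). -/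

import Mathlib

open scoped RealInnerProductSpace

/-- Dudek's convergence result for cutters: if each `s i`
satisfies the cutter inequality `⟪s i, z - x⟫ ≥ ‖s i‖²`, `z` lies in the
surrogate half-space (`⟪ĝ, z - x⟫ ≥ 0` for `ĝ = g/‖g‖`), `d i` is the projection
of `s i` onto the surrogate half-space, `d = ∑ i, w i • d i ≠ 0`,
`S = ∑ i, w i ‖s i‖²` and `λ ∈ [0,2)`, then the surrogate constraint step
`x^SC = x + λ (S/‖d‖²) • d` satisfies
`‖x^SC - z‖² ≤ ‖x - z‖² - λ(2-λ) S (S/‖d‖²)`. -/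
theorem dudek_surrogate_constraint_fejer {n : ℕ} {ι : Type*}
    [Fintype ι] [Nonempty ι]
    (w : ι → ℝ) (hw : ∀ i, 0 < w i) (hsum : ∑ i, w i = 1)
    (x z : EuclideanSpace ℝ (Fin n))
    (s : ι → EuclideanSpace ℝ (Fin n))
    (hcut : ∀ i, ⟪s i, z - x⟫ ≥ ‖s i‖ ^ 2)
    (g : EuclideanSpace ℝ (Fin n)) (hg : g ≠ 0)
    (ghat : EuclideanSpace ℝ (Fin n)) (hghat : ghat = ‖g‖⁻¹ • g)
    (hz : 0 ≤ ⟪ghat, z - x⟫)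
    (d : ι → EuclideanSpace ℝ (Fin n))
    (hdi : ∀ i, d i = s i - min 0 ⟪ghat, s i⟫ • ghat)
    (dbar : EuclideanSpace ℝ (Fin n)) (hdbar : dbar = ∑ i, w i • d i)
    (hdne : dbar ≠ 0)
    (S : ℝ) (hS : S = ∑ i, w i * ‖s i‖ ^ 2)
    (lam : ℝ) (hlam0 : 0 ≤ lam) (hlam2 : lam < 2)
    (xSC : EuclideanSpace ℝ (Fin n))
    (hxSC : xSC = x + (lam * (S / ‖dbar‖ ^ 2)) • dbar) :
    ‖xSC - z‖ ^ 2 ≤ ‖x - z‖ ^ 2 - lam * (2 - lam) * S * (S / ‖dbar‖ ^ 2) := by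
  have hD : (0:ℝ) < ‖dbar‖ ^ 2 := by
    have := norm_pos_iff.mpr hdne
    positivity
  have hS0 : 0 ≤ S := by
    rw [hS]
    apply Finset.sum_nonneg
    intro i _
    have := (hw i).le
    positivity
  -- key inequality: ⟪dbar, z - x⟫ ≥ S
  have hkey : S ≤ ⟪dbar, z - x⟫ := by
    rw [hdbar, hS, sum_inner]
    apply Finset.sum_le_sum
    intro i _
    rw [real_inner_smul_left]
    have hdz : ‖s i‖ ^ 2 ≤ ⟪d i, z - x⟫ := by
      rw [hdi i, inner_sub_left, real_inner_smul_left]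
      have h1 : min 0 ⟪ghat, s i⟫ * ⟪ghat, z - x⟫ ≤ 0 :=
        mul_nonpos_of_nonpos_of_nonneg (min_le_left _ _) hz
      linarith [hcut i]
    exact mul_le_mul_of_nonneg_left hdz (hw i).le
  set t : ℝ := lam * (S / ‖dbar‖ ^ 2) with ht
  have ht0 : 0 ≤ t := by
    apply mul_nonneg hlam0
    positivity
  have hexp : ‖xSC - z‖ ^ 2 = ‖x - z‖ ^ 2 - 2 * t * ⟪dbar, z - x⟫ + t ^ 2 * ‖dbar‖ ^ 2 := by
    have : xSC - z = (x - z) + t • dbar := by rw [hxSC]; abel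
    rw [this, norm_add_sq_real, real_inner_smul_right, norm_smul, Real.norm_eq_abs]
    have hxz : ⟪x - z, dbar⟫ = - ⟪dbar, z - x⟫ := by
      rw [real_inner_comm, inner_sub_right, inner_sub_right]; ring
    rw [hxz]
    rw [mul_pow, sq_abs]
    ring
  rw [hexp]
  have h1 : 2 * t * S ≤ 2 * t * ⟪dbar, z - x⟫ := by
    apply mul_le_mul_of_nonneg_left hkey
    linarith
  have h2 : t ^ 2 * ‖dbar‖ ^ 2 = lam ^ 2 * S * (S / ‖dbar‖ ^ 2) := by
    rw [ht]
    field_simp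
  have h3 : 2 * t * S = 2 * lam * S * (S / ‖dbar‖ ^ 2) := by rw [ht]; ring
  nlinarith [h1, h2, h3]
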